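/- Let G be a group, j ≥ 1, and a, X, X', Y, z_1, …, z_j ∈ G. If [Y, [a,X']] ∈ Z_j(G) and [a,Y] ∈ Z_{j+1}(G), then [a, XYX', z_1, …, z_j] = [a, XX', z_1, …, z_j] · [a, Y, z_1, …, z_j]. -/

import Mathlib

open scoped commutatorElement

/-- Iterated left-normed commutator `[a, z₁, …, z_r]`. -/
def itComm {G : Type} [Group G] (a : G) (zs : List G) : G :=
  zs.foldl (fun x y => ⁅x, y⁆) a

instance itComm_ucs_normal {G : Type} [Group G] (n : ℕ) : (upperCentralSeries G n).Normal :=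
  show (Subgroup.upperCentralSeries G n).Normal from inferInstance

/-- The image in `G ⧸ Z_j(G)` of an element of `Z_{j+1}(G)` is central. -/
lemma mk_central {G : Type} [Group G] {j : ℕ} {x : G}
    (h : x ∈ upperCentralSeries G (j + 1)) :
    ∀ q : G ⧸ upperCentralSeries G j,
      Commute (QuotientGroup.mk x) q := by
  intro q
  obtain ⟨y, rfl⟩ := QuotientGroup.mk_surjective q
  have hm : x * y * x⁻¹ * y⁻¹ ∈ upperCentralSeries G j :=
    mem_upperCentralSeries_succ_iff.mp h y
  have h1 : ((⁅x, y⁆ : G) : G ⧸ upperCentralSeries G j) = 1 := by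
    rw [QuotientGroup.eq_one_iff]
    simpa [commutatorElement_def] using hm
  have h2 : ⁅(x : G ⧸ upperCentralSeries G j), (y : G ⧸ upperCentralSeries G j)⁆ = 1 := by
    simpa [commutatorElement_def] using h1
  exact commutatorElement_eq_one_iff_commute.mp h2

/-- Pure group-theoretic helper: if `D` is central and `⁅W, Z⁆` is central, then
`⁅D*V*W, Z⁆ = ⁅W, Z⁆ * ⁅V, Z⁆`. -/
lemma comm_helper {Q : Type} [Group Q] (D V W Z : Q)
    (hD : ∀ q : Q, Commute D q) (hC : ∀ q : Q, Commute ⁅W, Z⁆ q) :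
    ⁅D * V * W, Z⁆ = ⁅W, Z⁆ * ⁅V, Z⁆ := by
  have hD' : ∀ q : Q, D⁻¹ * q = q * D⁻¹ := fun q => ((hD q).inv_left).eq
  calc ⁅D * V * W, Z⁆
      = D * (V * W * Z * W⁻¹ * V⁻¹ * D⁻¹) * Z⁻¹ := by
        simp [commutatorElement_def]; group
    _ = D * (D⁻¹ * (V * W * Z * W⁻¹ * V⁻¹)) * Z⁻¹ := by rw [hD']
    _ = V * (W * Z * W⁻¹ * Z⁻¹) * (Z * V⁻¹ * Z⁻¹) := by group
    _ = (V * ⁅W, Z⁆) * (Z * V⁻¹ * Z⁻¹) := by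
        simp [commutatorElement_def, mul_assoc]
    _ = (⁅W, Z⁆ * V) * (Z * V⁻¹ * Z⁻¹) := by rw [(hC V).eq]
    _ = ⁅W, Z⁆ * ⁅V, Z⁆ := by simp [commutatorElement_def]; group

/-- Pure group-theoretic helper for the final splitting identity. -/
lemma comm_helper2 {Q : Type} [Group Q] (a X X' Y : Q)
    (h1 : Commute Y ⁅a, X'⁆) (h2 : ∀ q : Q, Commute ⁅a, Y⁆ q) :
    ⁅a, X * Y * X'⁆ = ⁅a, X * X'⁆ * ⁅a, Y⁆ := by
  have h1' : Y * (a * X' * a⁻¹ * X'⁻¹) = (a * X' * a⁻¹ * X'⁻¹) * Y := by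
    have := h1.eq; simpa [commutatorElement_def, mul_assoc] using this
  have h2' : ∀ q : Q, (a * Y * a⁻¹ * Y⁻¹) * q = q * (a * Y * a⁻¹ * Y⁻¹) := by
    intro q
    have := (h2 q).eq
    simpa [commutatorElement_def, mul_assoc] using this
  calc ⁅a, X * Y * X'⁆
      = (a * X * a⁻¹ * X⁻¹)
        * (X * ((a * Y * a⁻¹ * Y⁻¹) * (Y * (a * X' * a⁻¹ * X'⁻¹) * Y⁻¹)) * X⁻¹) := by
        simp only [commutatorElement_def]; group
    _ = (a * X * a⁻¹ * X⁻¹)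
        * (X * ((a * Y * a⁻¹ * Y⁻¹) * ((a * X' * a⁻¹ * X'⁻¹) * Y * Y⁻¹)) * X⁻¹) := by
        rw [h1']
    _ = (a * X * a⁻¹ * X⁻¹)
        * (X * ((a * Y * a⁻¹ * Y⁻¹) * (a * X' * a⁻¹ * X'⁻¹)) * X⁻¹) := by
        group
    _ = (a * X * a⁻¹ * X⁻¹)
        * (X * ((a * X' * a⁻¹ * X'⁻¹) * (a * Y * a⁻¹ * Y⁻¹)) * X⁻¹) := by
        rw [h2']
    _ = ((a * X * a⁻¹ * X⁻¹) * (X * (a * X' * a⁻¹ * X'⁻¹) * X⁻¹))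
        * (X * (a * Y * a⁻¹ * Y⁻¹) * X⁻¹) := by group
    _ = ((a * X * a⁻¹ * X⁻¹) * (X * (a * X' * a⁻¹ * X'⁻¹) * X⁻¹))
        * ((a * Y * a⁻¹ * Y⁻¹) * X * X⁻¹) := by rw [← h2' X]
    _ = ⁅a, X * X'⁆ * ⁅a, Y⁆ := by simp only [commutatorElement_def]; group

/-- Main induction: if `w ∈ Z_{j+1}` and `u ≡ v * w` mod `Z_j`, then iterated
commutators of length `j` split. -/
lemma itComm_aux {G : Type} [Group G] :
    ∀ (j : ℕ) (u v w : G), w ∈ upperCentralSeries G (j + 1) →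
      u * w⁻¹ * v⁻¹ ∈ upperCentralSeries G j →
      ∀ zs : List G, zs.length = j →
        itComm u zs = itComm v zs * itComm w zs := by
  intro j
  induction j with
  | zero =>
    intro u v w hw hc zs hzs
    have hzs' : zs = [] := List.length_eq_zero_iff.mp hzs
    subst hzs'
    change u * w⁻¹ * v⁻¹ ∈ (⊥ : Subgroup G) at hc
    have h1 : u * w⁻¹ * v⁻¹ = 1 := Subgroup.mem_bot.mp hc
    have hwc : w ∈ Subgroup.center G := by
      rw [← upperCentralSeries_one]; exact hw
    have hu : u = v * w := by
      calc u = (u * w⁻¹ * v⁻¹) * v * w := by group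
        _ = v * w := by rw [h1]; group
    simpa [itComm] using hu
  | succ j ih =>
    intro u v w hw hc zs hzs
    cases zs with
    | nil => simp at hzs
    | cons z zs =>
      have hzs' : zs.length = j := by simpa using hzs
      have hstep : ∀ x : G, itComm x (z :: zs) = itComm ⁅x, z⁆ zs := fun _ => rfl
      rw [hstep, hstep, hstep]
      have hw' : ⁅w, z⁆ ∈ upperCentralSeries G (j + 1) := by
        have := mem_upperCentralSeries_succ_iff.mp hw z
        exact this
      apply ih ⁅u, z⁆ ⁅v, z⁆ ⁅w, z⁆ hw' _ zs hzs'
      -- show ⁅u,z⁆ * ⁅w,z⁆⁻¹ * ⁅v,z⁆⁻¹ ∈ Z j, by passing to G ⧸ Z j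
      rw [← QuotientGroup.eq_one_iff (N := upperCentralSeries G j) _]
      set Q := G ⧸ upperCentralSeries G j
      have hD : ∀ q : Q, Commute ((u * w⁻¹ * v⁻¹ : G) : Q) q := mk_central hc
      have hC : ∀ q : Q, Commute ⁅((w : G) : Q), ((z : G) : Q)⁆ q := by
        intro q
        have hwz' : ⁅w, z⁆ ∈ upperCentralSeries G (j + 1) := hw'
        have := mk_central hwz' q
        simpa [commutatorElement_def] using this
      have key : ⁅((u : G) : Q), ((z : G) : Q)⁆
          = ⁅((w : G) : Q), ((z : G) : Q)⁆ * ⁅((v : G) : Q), ((z : G) : Q)⁆ := by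
        have hu0 : ((u : G) : Q) = (((u * w⁻¹ * v⁻¹) * v * w : G) : Q) :=
          congrArg _ (by group)
        have hu : ((u : G) : Q) = ((u * w⁻¹ * v⁻¹ : G) : Q) * ((v : G) : Q) * ((w : G) : Q) := by
          rw [hu0, QuotientGroup.mk_mul, QuotientGroup.mk_mul]
        rw [hu]
        exact comm_helper _ _ _ _ hD hC
      have : (((⁅u, z⁆ * ⁅w, z⁆⁻¹ * ⁅v, z⁆⁻¹ : G)) : Q)
          = ⁅((u : G) : Q), ((z : G) : Q)⁆ * ⁅((w : G) : Q), ((z : G) : Q)⁆⁻¹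
            * ⁅((v : G) : Q), ((z : G) : Q)⁆⁻¹ := by
        simp [commutatorElement_def]
      rw [this, key]
      rw [(hC ⁅((v : G) : Q), ((z : G) : Q)⁆).eq]
      group

/-- if `[Y,[a,X']] ∈ Z_j(G)` and `[a,Y] ∈ Z_{j+1}(G)` (j ≥ 1), then
`[a, X*Y*X', z₁, …, z_j] = [a, X*X', z₁, …, z_j] * [a, Y, z₁, …, z_j]`. -/
theorem itComm_split {G : Type} [Group G] (j : ℕ) (hj : 1 ≤ j) (a X X' Y : G)
    (h1 : ⁅Y, ⁅a, X'⁆⁆ ∈ upperCentralSeries G j)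
    (h2 : ⁅a, Y⁆ ∈ upperCentralSeries G (j + 1)) :
    ∀ zs : List G, zs.length = j →
      itComm ⁅a, X * Y * X'⁆ zs = itComm ⁅a, X * X'⁆ zs * itComm ⁅a, Y⁆ zs := by
  apply itComm_aux j _ _ _ h2
  rw [← QuotientGroup.eq_one_iff (N := upperCentralSeries G j) _]
  set Q := G ⧸ upperCentralSeries G j
  have h1' : Commute ((Y : G) : Q) ⁅((a : G) : Q), ((X' : G) : Q)⁆ := by
    apply commutatorElement_eq_one_iff_commute.mp
    have : ((⁅Y, ⁅a, X'⁆⁆ : G) : Q) = 1 := (QuotientGroup.eq_one_iff _).mpr h1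
    simpa [commutatorElement_def] using this
  have h2' : ∀ q : Q, Commute ⁅((a : G) : Q), ((Y : G) : Q)⁆ q := by
    intro q
    have := mk_central h2 q
    simpa [commutatorElement_def] using this
  have key : ⁅((a : G) : Q), ((X : G) : Q) * ((Y : G) : Q) * ((X' : G) : Q)⁆
      = ⁅((a : G) : Q), ((X : G) : Q) * ((X' : G) : Q)⁆ * ⁅((a : G) : Q), ((Y : G) : Q)⁆ :=
    comm_helper2 _ _ _ _ h1' h2'
  have : (((⁅a, X * Y * X'⁆ * ⁅a, Y⁆⁻¹ * ⁅a, X * X'⁆⁻¹ : G)) : Q)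
      = ⁅((a : G) : Q), ((X : G) : Q) * ((Y : G) : Q) * ((X' : G) : Q)⁆
        * ⁅((a : G) : Q), ((Y : G) : Q)⁆⁻¹
        * ⁅((a : G) : Q), ((X : G) : Q) * ((X' : G) : Q)⁆⁻¹ := by
    simp [commutatorElement_def]
  rw [this, key]
  group
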